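/- For r > 1 and nonnegative integers s₁,…,s_r, one has Li⁻_{(s₁,…,s_r)} = ∑_{k₁=0}^{s₁} ∑_{k₂=0}^{s₁+s₂−k₁} ⋯ ∑_{k_{r−1}=0}^{s₁+⋯+s_{r−1}−k₁−⋯−k_{r−2}} C(s₁,k₁)·C(s₁+s₂−k₁, k₂)⋯C(s₁+⋯+s_{r−1}−k₁−⋯−k_{r−2}, k_{r−1}) · Li⁻_{k₁}·Li⁻_{k₂}⋯Li⁻_{k_{r−1}}·Li⁻_{s₁+⋯+s_r−k₁−⋯−k_{r−1}}, i.e. any non-positive MPL is a ℤ-linear combination of products of depth-one non-positive polylogarithms with multiple binomial coefficients. -/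

import Mathlib

open PowerSeries Finset

/-- Coefficient at `z^n` of the non-positive MPL attached to an index list:
for `s = (s₁,…,s_r)` this is `∑_{n = n₁ > n₂ > ⋯ > n_r > 0} n₁^{s₁}⋯n_r^{s_r}`. -/
def liCoeff : List ℕ → ℕ → ℚ
  | [], n => if n = 0 then 1 else 0
  | s :: t, n => if n = 0 then 0 else (n : ℚ) ^ s * ∑ m ∈ Finset.range n, liCoeff t m

/-- The non-positive multiple polylogarithm
`Li⁻_{(s₁,…,s_r)}(z) = ∑_{n₁>⋯>n_r>0} n₁^{s₁}⋯n_r^{s_r} z^{n₁} ∈ ℚ⟦z⟧`. -/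
noncomputable def Li (s : List ℕ) : PowerSeries ℚ := PowerSeries.mk (liCoeff s)

/-- Extension of a finite tuple to a function on `ℕ` (by `0`). -/
def ext {m : ℕ} (k : Fin m → ℕ) : ℕ → ℕ := fun i => if h : i < m then k ⟨i, h⟩ else 0

/-- The nested upper bound `s₁+⋯+s_{i+1} − (k₁+⋯+k_i)` (0-indexed `i`). -/
def arrBound {r : ℕ} (s : Fin r → ℕ) {m : ℕ} (k : Fin m → ℕ) (i : ℕ) : ℕ :=
  (∑ j ∈ Finset.range (i + 1), ext s j) - ∑ j ∈ Finset.range i, ext k j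

lemma liCoeff_single (k n : ℕ) : liCoeff [k] n = if n = 0 then 0 else (n:ℚ)^k := by
  rcases Nat.eq_zero_or_pos n with h | h
  · subst h; simp [liCoeff]
  · rw [liCoeff, if_neg h.ne', if_neg h.ne']
    have : ∑ m ∈ Finset.range n, liCoeff [] m = 1 := by
      rw [show liCoeff ([]:List ℕ) = fun n => if n = 0 then (1:ℚ) else 0 from rfl]
      rw [Finset.sum_ite_eq' (Finset.range n) 0 (fun _ => (1:ℚ))]
      simp [h]
    rw [this, mul_one]

lemma liCoeff_shift {a k : ℕ} (hk : k ≤ a) (b : ℕ) (t : List ℕ) (m : ℕ) :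
    (m:ℚ)^(a - k) * liCoeff (b :: t) m = liCoeff ((a + b - k) :: t) m := by
  rcases Nat.eq_zero_or_pos m with h | h
  · subst h; simp [liCoeff]
  · rw [liCoeff, liCoeff, if_neg h.ne', if_neg h.ne',
      show a + b - k = (a - k) + b by omega, pow_add]
    ring

lemma Li_rec (a b : ℕ) (t : List ℕ) :
    Li (a :: b :: t) = ∑ k ∈ Finset.range (a+1),
      ((a.choose k : ℚ)) • (Li [k] * Li ((a + b - k) :: t)) := by
  ext n
  rw [map_sum]
  simp only [PowerSeries.coeff_smul, PowerSeries.coeff_mul, Li, PowerSeries.coeff_mk,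
    liCoeff_single]
  rcases Nat.eq_zero_or_pos n with h | h
  · subst h
    simp [liCoeff]
  · rw [liCoeff, if_neg h.ne']
    have key : ∀ k ∈ Finset.range (a+1),
        (a.choose k : ℚ) • ∑ p ∈ Finset.HasAntidiagonal.antidiagonal n,
          (if p.1 = 0 then 0 else (p.1:ℚ)^k) * liCoeff ((a + b - k) :: t) p.2
        = (a.choose k : ℚ) * ∑ i ∈ Finset.range n,
          ((i+1:ℕ):ℚ)^k * liCoeff ((a + b - k) :: t) (n - 1 - i) := by
      intro k _
      rw [smul_eq_mul]
      congr 1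
      rw [Finset.Nat.sum_antidiagonal_eq_sum_range_succ_mk]
      obtain ⟨n', rfl⟩ : ∃ n', n = n' + 1 := ⟨n - 1, by omega⟩
      rw [Finset.sum_range_succ']
      rw [if_pos rfl, zero_mul, add_zero]
      refine Finset.sum_congr rfl fun i hi => ?_
      rw [Finset.mem_range] at hi
      rw [if_neg (Nat.succ_ne_zero i)]
      congr 2
      all_goals first | rfl | omega | (push_cast; ring)
    rw [Finset.sum_congr rfl key]
    simp only [Finset.mul_sum]
    rw [Finset.sum_comm, ← Finset.sum_range_reflect (fun m => (n:ℚ)^a * liCoeff (b::t) m) n]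
    refine Finset.sum_congr rfl fun i hi => ?_
    rw [Finset.mem_range] at hi
    have hm : n = (i+1) + (n - 1 - i) := by omega
    have hn : (n:ℚ) = ((i+1:ℕ):ℚ) + ((n-1-i:ℕ):ℚ) := by rw [← Nat.cast_add, ← hm]
    rw [hn, add_pow, Finset.sum_mul]
    refine Finset.sum_congr rfl fun k hk => ?_
    rw [Finset.mem_range] at hk
    rw [← liCoeff_shift (show k ≤ a by omega) b t (n-1-i)]
    ring





lemma ext_coe {m : ℕ} (k : Fin m → ℕ) (i : Fin m) : ext k (i : ℕ) = k i := by
  simp [_root_.ext, i.isLt]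

lemma ext_zero {m : ℕ} (k : Fin (m+1) → ℕ) : ext k 0 = k 0 := by
  simp [_root_.ext]

lemma ext_tail {m : ℕ} (k : Fin (m+1) → ℕ) (j : ℕ) :
    ext (fun i => k i.succ) j = ext k (j+1) := by
  unfold _root_.ext
  rcases lt_or_ge j m with h | h
  · rw [dif_pos h, dif_pos (by omega : j + 1 < m + 1)]
    congr 1
  · rw [dif_neg (by omega), dif_neg (by omega)]

lemma ext_cons_zero {m : ℕ} (x : ℕ) (k : Fin m → ℕ) : ext (Fin.cons x k) 0 = x := by
  simp [_root_.ext]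

lemma ext_cons_succ {m : ℕ} (x : ℕ) (k : Fin m → ℕ) (j : ℕ) :
    ext (Fin.cons x k) (j+1) = ext k j := by
  rw [← ext_tail]
  congr

lemma sum_ext_full {m : ℕ} (k : Fin m → ℕ) : ∑ j ∈ Finset.range m, ext k j = ∑ i, k i := by
  rw [← Fin.sum_univ_eq_sum_range (fun j => ext k j) m]
  exact Finset.sum_congr rfl fun i _ => ext_coe k i

lemma sum_ext_le {m : ℕ} (k : Fin m → ℕ) (t : ℕ) :
    ∑ j ∈ Finset.range t, ext k j ≤ ∑ i, k i := by
  rw [← sum_ext_full]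
  rcases le_total t m with h | h
  · exact Finset.sum_le_sum_of_subset (Finset.range_subset_range.2 h)
  · rw [Finset.sum_subset (Finset.range_subset_range.2 h)]
    intro x _ hx
    rw [Finset.mem_range, not_lt] at hx
    exact dif_neg (by omega)

lemma arrBound_le {r m : ℕ} (s : Fin r → ℕ) (k : Fin m → ℕ) (i : ℕ) :
    arrBound s k i ≤ ∑ i, s i :=
  le_trans (Nat.sub_le _ _) (sum_ext_le s _)

lemma arrBound_zero {r m : ℕ} (s : Fin (r+1) → ℕ) (k : Fin m → ℕ) :
    arrBound s k 0 = s 0 := by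
  simp [arrBound, ext_zero]

lemma sum_ext_cons {m : ℕ} (x : ℕ) (k : Fin m → ℕ) (i : ℕ) :
    ∑ j ∈ Finset.range (i+1), ext (Fin.cons x k) j = x + ∑ j ∈ Finset.range i, ext k j := by
  rw [Finset.sum_range_succ']
  simp only [ext_cons_succ, ext_cons_zero]
  omega

lemma sum_ext_tail {m : ℕ} (k : Fin (m+1) → ℕ) (i : ℕ) :
    ∑ j ∈ Finset.range (i+1), ext k j = k 0 + ∑ j ∈ Finset.range i, ext (fun i => k i.succ) j := by
  rw [Finset.sum_range_succ']
  simp only [ext_tail, ext_zero]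
  omega

lemma arrBound_cons {m : ℕ} (s : Fin (m+2) → ℕ) (k0 : ℕ) (hk0 : k0 ≤ s 0)
    (k' : Fin m → ℕ) (i : ℕ) :
    arrBound s (Fin.cons k0 k' : Fin (m+1) → ℕ) (i+1)
      = arrBound (Fin.cons (s 0 + s 1 - k0) (fun i => s i.succ.succ) : Fin (m+1) → ℕ) k' i := by
  unfold arrBound
  rw [sum_ext_cons, sum_ext_tail, sum_ext_tail, sum_ext_cons]
  have he : ∀ j, ext (fun i : Fin m => s i.succ.succ) j
      = ext (fun i : Fin (m+1) => s i.succ) (j+1) := by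
    intro j
    rw [← ext_tail (fun i : Fin (m+1) => s i.succ) j]
  simp only [he]
  have h1 : s (0 : Fin (m+1)).succ = s 1 := by norm_num
  rw [h1]
  generalize (∑ j ∈ Finset.range i, ext (fun i : Fin (m+1) => s i.succ) (j+1)) = A
  generalize (∑ j ∈ Finset.range i, ext k' j) = B
  omega

lemma sum_cons_total {m : ℕ} (s : Fin (m+2) → ℕ) (k0 : ℕ) (hk0 : k0 ≤ s 0) :
    (∑ i, (Fin.cons (s 0 + s 1 - k0) (fun i => s i.succ.succ) : Fin (m+1) → ℕ) i)
      = (∑ i, s i) - k0 := by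
  rw [Fin.sum_univ_succ (Fin.cons (s 0 + s 1 - k0) (fun i : Fin m => s i.succ.succ))]
  rw [Fin.sum_univ_succ s, Fin.sum_univ_succ (fun i : Fin (m+1) => s i.succ)]
  simp only [Fin.cons_zero, Fin.cons_succ]
  have h1 : s (0 : Fin (m+1)).succ = s 1 := by norm_num
  rw [h1]
  omega

def consS {m : ℕ} (s : Fin (m+2) → ℕ) (k0 : ℕ) : Fin (m+1) → ℕ :=
  Fin.cons (s 0 + s 1 - k0) (fun i => s i.succ.succ)

lemma arrBound_consS {m : ℕ} (s : Fin (m+2) → ℕ) (k0 : ℕ) (hk0 : k0 ≤ s 0)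
    (k' : Fin m → ℕ) (i : ℕ) :
    arrBound s (Fin.cons k0 k' : Fin (m+1) → ℕ) (i+1) = arrBound (consS s k0) k' i :=
  arrBound_cons s k0 hk0 k' i

lemma sum_consS {m : ℕ} (s : Fin (m+2) → ℕ) (k0 : ℕ) (hk0 : k0 ≤ s 0) :
    (∑ i, consS s k0 i) = (∑ i, s i) - k0 :=
  sum_cons_total s k0 hk0

theorem aux (m : ℕ) : ∀ s : Fin (m+1) → ℕ,
    Li (List.ofFn s) =
      ∑ k ∈ (Fintype.piFinset fun _ : Fin m =>
            Finset.range ((∑ i, s i) + 1)).filter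
          (fun k => ∀ i : Fin m, k i ≤ arrBound s k (i : ℕ)),
        (∏ i ∈ Finset.range m, ((arrBound s k i).choose (ext k i) : ℚ)) •
          ((∏ i ∈ Finset.range m, Li [ext k i]) *
            Li [(∑ i, s i) - ∑ i ∈ Finset.range m, ext k i]) := by
  induction m with
  | zero =>
    intro s
    have hs : ((Fintype.piFinset fun _ : Fin 0 => Finset.range ((∑ i, s i) + 1)).filter
        (fun k => ∀ i : Fin 0, k i ≤ arrBound s k (i : ℕ))) = {fun i => i.elim0} := by
      apply Finset.eq_singleton_iff_unique_mem.2
      constructor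
      · rw [Finset.mem_filter]
        exact ⟨by rw [Fintype.mem_piFinset]; intro i; exact i.elim0, fun i => i.elim0⟩
      · intro x _
        funext i
        exact i.elim0
    rw [hs, Finset.sum_singleton]
    simp only [Finset.prod_range_zero, Finset.sum_range_zero, one_smul, one_mul, Nat.sub_zero]
    have h1 : List.ofFn s = [s 0] := by simp [List.ofFn_succ]
    have h2 : (∑ i, s i) = s 0 := by simp
    rw [h1, h2]
  | succ m IH =>
    intro s
    have hofn : List.ofFn s = s 0 :: s 1 :: List.ofFn (fun i : Fin m => s i.succ.succ) := by
      rw [List.ofFn_succ, List.ofFn_succ]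
      rfl
    rw [hofn, Li_rec]
    have step1 : ∀ k0 ∈ Finset.range (s 0 + 1),
        ((s 0).choose k0 : ℚ) •
          (Li [k0] * Li ((s 0 + s 1 - k0) :: List.ofFn fun i : Fin m => s i.succ.succ)) =
        ∑ k' ∈ (Fintype.piFinset fun _ : Fin m =>
              Finset.range ((∑ i, consS s k0 i) + 1)).filter
            (fun k' => ∀ i : Fin m, k' i ≤ arrBound (consS s k0) k' (i : ℕ)),
          ((s 0).choose k0 : ℚ) •
            (Li [k0] *
              ((∏ i ∈ Finset.range m, ((arrBound (consS s k0) k' i).choose (ext k' i) : ℚ)) •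
                ((∏ i ∈ Finset.range m, Li [ext k' i]) *
                  Li [(∑ i, consS s k0 i) - ∑ i ∈ Finset.range m, ext k' i]))) := by
      intro k0 _
      have hc : (s 0 + s 1 - k0) :: List.ofFn (fun i : Fin m => s i.succ.succ)
          = List.ofFn (consS s k0) := by
        rw [List.ofFn_succ]
        rfl
      rw [hc, IH (consS s k0), Finset.mul_sum, Finset.smul_sum]
    rw [Finset.sum_congr rfl step1, Finset.sum_sigma']
    refine Finset.sum_nbij' (fun p => Fin.cons p.1 p.2) (fun k => ⟨k 0, Fin.tail k⟩)
      ?_ ?_ ?_ ?_ ?_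
    · -- forward membership
      rintro ⟨k0, k'⟩ hp
      rw [Finset.mem_sigma] at hp
      obtain ⟨h1, h2⟩ := hp
      rw [Finset.mem_range] at h1
      have hk0 : k0 ≤ s 0 := Nat.lt_succ_iff.mp h1
      rw [Finset.mem_filter] at h2 ⊢
      obtain ⟨h2a, h2b⟩ := h2
      rw [Fintype.mem_piFinset] at h2a
      have hfilter : ∀ i : Fin (m+1), (Fin.cons k0 k' : Fin (m+1) → ℕ) i
          ≤ arrBound s (Fin.cons k0 k' : Fin (m+1) → ℕ) (i : ℕ) := by
        intro i
        refine Fin.cases ?_ (fun j => ?_) i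
        · rw [Fin.val_zero, arrBound_zero]
          simpa using hk0
        · have : ((j.succ : Fin (m+1)) : ℕ) = (j : ℕ) + 1 := rfl
          rw [this, arrBound_consS s k0 hk0, Fin.cons_succ]
          exact h2b j
      refine ⟨?_, hfilter⟩
      rw [Fintype.mem_piFinset]
      intro i
      rw [Finset.mem_range, Nat.lt_succ_iff]
      exact le_trans (hfilter i) (arrBound_le s _ _)
    · -- backward membership
      intro k hk
      rw [Finset.mem_filter] at hk
      obtain ⟨hka, hkb⟩ := hk
      have hk0 : k 0 ≤ s 0 := by
        have := hkb 0
        rwa [Fin.val_zero, arrBound_zero] at this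
      rw [Finset.mem_sigma]
      constructor
      · rw [Finset.mem_range, Nat.lt_succ_iff]; exact hk0
      · rw [Finset.mem_filter]
        have hbd : ∀ j : Fin m, Fin.tail k j ≤ arrBound (consS s (k 0)) (Fin.tail k) (j : ℕ) := by
          intro j
          have h1 := hkb j.succ
          have h2 : ((j.succ : Fin (m+1)) : ℕ) = (j : ℕ) + 1 := rfl
          rw [h2] at h1
          have h3 : arrBound s k ((j : ℕ) + 1)
              = arrBound (consS s (k 0)) (Fin.tail k) (j : ℕ) := by
            conv_lhs => rw [← Fin.cons_self_tail k]
            exact arrBound_consS s (k 0) hk0 (Fin.tail k) j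
          rw [h3] at h1
          exact h1
        refine ⟨?_, hbd⟩
        rw [Fintype.mem_piFinset]
        intro j
        rw [Finset.mem_range, Nat.lt_succ_iff]
        exact le_trans (hbd j) (arrBound_le _ _ _)
    · rintro ⟨k0, k'⟩ _
      simp [Fin.tail_cons]
    · intro k _
      exact Fin.cons_self_tail k
    · -- value equality
      rintro ⟨k0, k'⟩ hp
      rw [Finset.mem_sigma] at hp
      obtain ⟨h1, _⟩ := hp
      rw [Finset.mem_range] at h1
      have hk0 : k0 ≤ s 0 := Nat.lt_succ_iff.mp h1
      have hchoose : ∏ i ∈ Finset.range (m+1),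
          ((arrBound s (Fin.cons k0 k' : Fin (m+1) → ℕ) i).choose
            (ext (Fin.cons k0 k' : Fin (m+1) → ℕ) i) : ℚ)
          = (∏ i ∈ Finset.range m, ((arrBound (consS s k0) k' i).choose (ext k' i) : ℚ))
            * ((s 0).choose k0 : ℚ) := by
        rw [Finset.prod_range_succ']
        congr 1
        · refine Finset.prod_congr rfl fun i _ => ?_
          rw [arrBound_consS s k0 hk0, ext_cons_succ]
      have hli : ∏ i ∈ Finset.range (m+1), Li [ext (Fin.cons k0 k' : Fin (m+1) → ℕ) i]
          = (∏ i ∈ Finset.range m, Li [ext k' i]) * Li [k0] := by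
        rw [Finset.prod_range_succ']
        congr 1
        · exact Finset.prod_congr rfl fun i _ => by rw [ext_cons_succ]
      have hlast : (∑ i, s i) - ∑ i ∈ Finset.range (m+1), ext (Fin.cons k0 k' : Fin (m+1) → ℕ) i
          = (∑ i, consS s k0 i) - ∑ i ∈ Finset.range m, ext k' i := by
        rw [sum_ext_cons, sum_consS s k0 hk0, ← Nat.sub_sub]
      rw [hchoose, hli, hlast, mul_smul_comm, smul_smul, mul_comm ((s 0).choose k0 : ℚ)]
      congr 1
      ring

theorem Li_full_expansion (r : ℕ) (hr : 1 < r) (s : Fin r → ℕ) :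
    Li (List.ofFn s) =
      ∑ k ∈ (Fintype.piFinset fun _ : Fin (r - 1) =>
            Finset.range ((∑ i, s i) + 1)).filter
          (fun k => ∀ i : Fin (r - 1), k i ≤ arrBound s k (i : ℕ)),
        (∏ i ∈ Finset.range (r - 1), ((arrBound s k i).choose (ext k i) : ℚ)) •
          ((∏ i ∈ Finset.range (r - 1), Li [ext k i]) *
            Li [(∑ i, s i) - ∑ i ∈ Finset.range (r - 1), ext k i]) := by
  obtain ⟨m, rfl⟩ : ∃ m, r = m + 1 := ⟨r - 1, by omega⟩
  exact aux m s
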